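/- Let G be a group. If the quotient G/Z(G) of G by its center is finite, then the commutator subgroup [G, G] is finite. -/

import Mathlib

open scoped commutatorElement

lemma comm_aux_left {G : Type*} [Group G] (g h z : G) (hz : z ∈ Subgroup.center G) :
    ⁅g * z, h⁆ = ⁅g, h⁆ := by
  have hzc := Subgroup.mem_center_iff.mp hz
  simp only [commutatorElement_def, mul_inv_rev, mul_assoc]
  rw [← mul_assoc z h, ← hzc h, mul_assoc h z, mul_inv_cancel_left]

lemma comm_aux_right {G : Type*} [Group G] (g h w : G) (hw : w ∈ Subgroup.center G) :
    ⁅g, h * w⁆ = ⁅g, h⁆ := by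
  have hwc := Subgroup.mem_center_iff.mp hw
  simp only [commutatorElement_def, mul_inv_rev, mul_assoc]
  rw [← mul_assoc w g⁻¹, ← hwc g⁻¹, mul_assoc g⁻¹ w, mul_inv_cancel_left]

lemma comm_aux {G : Type*} [Group G] (g h z w : G) (hz : z ∈ Subgroup.center G)
    (hw : w ∈ Subgroup.center G) : ⁅g * z, h * w⁆ = ⁅g, h⁆ := by
  rw [comm_aux_right _ _ _ hw, comm_aux_left _ _ _ hz]

/-- **Schur's theorem.** If `G/Z(G)` is finite, then the commutator subgroup `[G, G]`
is finite. -/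
theorem commutator_finite_of_finite_quotient_center
    {G : Type*} [Group G] (h : Finite (G ⧸ Subgroup.center G)) :
    Finite ↥(commutator G) := by
  have : Finite (commutatorSet G) := by
    set Q := G ⧸ Subgroup.center G with hQ
    let f : Q × Q → G := fun p => ⁅p.1.out, p.2.out⁆
    have hsub : commutatorSet G ⊆ Set.range f := by
      rintro x ⟨a, b, rfl⟩
      refine ⟨(QuotientGroup.mk a, QuotientGroup.mk b), ?_⟩
      obtain ⟨⟨z, hz⟩, hza⟩ := QuotientGroup.mk_out_eq_mul (Subgroup.center G) a
      obtain ⟨⟨w, hw⟩, hwb⟩ := QuotientGroup.mk_out_eq_mul (Subgroup.center G) b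
      show ⁅(QuotientGroup.mk a : Q).out, (QuotientGroup.mk b : Q).out⁆ = ⁅a, b⁆
      rw [hza, hwb]
      exact comm_aux a b z w hz hw
    exact ((Set.finite_range f).subset hsub).to_subtype
  infer_instance
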